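/- (Claim 3.3.) For every deterministic incremental retrieval scheme (F, G, Query) in the model and every real S ≥ H(F): if i is drawn uniformly from {1, …, m}, independently of the process, then the expected size of the plausible set satisfies E_{i, A, R_A}[ |P_i(F(A, R_A))| ] ≥ (u/m) · 2^{v − 1} · 2^{−S/m}. -/

import Mathlib

noncomputable section

namespace Retrieval

/-! ### Entropy on a finite sample space with the uniform distribution -/

/-- The probability of an event `s` under the uniform distribution on a finite type `Ω`. -/
def unifPr (Ω : Type*) [Fintype Ω] (s : Set Ω) : ℝ :=
  (Nat.card s : ℝ) / (Fintype.card Ω : ℝ)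

/-- The Shannon entropy (in bits) of a random variable `X` defined on a finite sample
space `Ω` carrying the uniform distribution. -/
def entropy {Ω : Type*} {α : Type*} [Fintype Ω] (X : Ω → α) : ℝ :=
  (∑ ω : Ω, -Real.logb 2 (unifPr Ω {ω' | X ω' = X ω})) / (Fintype.card Ω : ℝ)

/-- The conditional Shannon entropy `H(X | Y) = H(X, Y) − H(Y)` (in bits). -/
def condEntropy {Ω : Type*} {α β : Type*} [Fintype Ω] (X : Ω → α) (Y : Ω → β) : ℝ :=
  entropy (fun ω => (X ω, Y ω)) - entropy Y

/-- The first bit of a `v`-bit string. -/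
def firstBit {v : ℕ} (r : Fin v → Bool) : Bool :=
  if h : 0 < v then r ⟨0, h⟩ else false

/-! ### The incremental random process

Parameters `n v u`.  The universe `[u]` is split into `m = n − n/v` consecutive parts,
each of size `u/m`.  An element of the `i`-th part is identified by its position
`a ∈ Fin (u/m)` inside the part; as a natural number it is the key `i·(u/m) + a`. -/

variable (n v u : ℕ)

/-- `m = n − n/v`, the number of parts of the universe. -/
def M : ℕ := n - n / v

/-- `u/m`, the size of each part of the universe. -/
def W : ℕ := u / M n v

/-- The key (element of `[u]`, 0-indexed) at position `a` of part `i`. -/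
def key (i : Fin (M n v)) (a : Fin (W n v u)) : ℕ := (i : ℕ) * W n v u + (a : ℕ)

/-- The model hypotheses on the parameters: `2 ≤ v ≤ log₂ n`, `v ∣ n`,
`m = n − n/v` divides `u`, and `u ≥ n³`. -/
def Hyp : Prop :=
  2 ≤ v ∧ (v : ℝ) ≤ Real.logb 2 n ∧ v ∣ n ∧ M n v ∣ u ∧ n ^ 3 ≤ u

/-- Raw data of a realization of the incremental random process:
`((A, R_A), (P_B, B, R_B))`.  `A i` is the (position of the) element of `A` in part `i`
and `R_A i` its `v`-bit value; `P_B` is the set of parts from which `B` samples, `B i` the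
element of `B` in part `i` (for `i ∈ P_B`; it is a canonical junk value `0` otherwise) and
`R_B i` its value (a canonical junk value otherwise). -/
abbrev IncData : Type :=
  ((Fin (M n v) → Fin (W n v u)) × (Fin (M n v) → Fin v → Bool)) ×
    (Finset (Fin (M n v)) × (Fin (M n v) → Fin (W n v u)) × (Fin (M n v) → Fin v → Bool))

/-- Validity of a realization of `(A, R_A)`: every value has first bit `0`
(the set `A` itself is unconstrained). -/
def ValidAR (_A : Fin (M n v) → Fin (W n v u)) (RA : Fin (M n v) → Fin v → Bool) : Prop :=
  ∀ j, firstBit (RA j) = false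

/-- Validity of a realization `(P_B, B)` given `A`: `|P_B| = n/v`, for `i ∈ P_B` the
element `B i` avoids `A i`, and outside `P_B` the function `B` takes a canonical junk
value (so that `(P_B, B)` carries exactly the information of the indexed family
`(b_i)_{i ∈ P_B}`). -/
def ValidB (A : Fin (M n v) → Fin (W n v u)) (P : Finset (Fin (M n v)))
    (B : Fin (M n v) → Fin (W n v u)) : Prop :=
  P.card = n / v ∧ (∀ j ∈ P, B j ≠ A j) ∧ ∀ j ∉ P, (B j : ℕ) = 0

/-- Validity of a realization of `R_B` given `P_B`: for `i ∈ P_B` the value has first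
bit `1`; outside `P_B` it is a canonical junk value. -/
def ValidRB (P : Finset (Fin (M n v))) (RB : Fin (M n v) → Fin v → Bool) : Prop :=
  (∀ j ∈ P, firstBit (RB j) = true) ∧ ∀ j ∉ P, RB j = fun _ => false

/-- Validity of a full realization of the incremental process. -/
def IncValid (d : IncData n v u) : Prop :=
  ValidAR n v u d.1.1 d.1.2 ∧ ValidB n v u d.1.1 d.2.1 d.2.2.1 ∧ ValidRB n v d.2.1 d.2.2.2

/-- The sample space of the incremental random process: since every random choice in the
process is uniform (subject to the stated constraints, whose number of options does not
depend on the previous choices), the joint distribution of `(A, R_A, P_B, B, R_B)` is the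
uniform distribution on the set of valid realizations. -/
abbrev IncOmega : Type := {d : IncData n v u // IncValid n v u d}

noncomputable instance : Fintype (IncOmega n v u) := Fintype.ofFinite _

/-- The type of the (deterministic) map `F`, building a bit string from a realization of
`(A, R_A)`. -/
abbrev FBuilder : Type :=
  (Fin (M n v) → Fin (W n v u)) → (Fin (M n v) → Fin v → Bool) → List Bool

/-- The type of the (deterministic) map `G`, building a bit string from a bit string
together with a realization of `(B, R_B)` (given as `(P_B, B, R_B)`). -/
abbrev GBuilder : Type :=
  List Bool → Finset (Fin (M n v)) → (Fin (M n v) → Fin (W n v u)) →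
    (Fin (M n v) → Fin v → Bool) → List Bool

/-- The type of the (deterministic) query map: a bit string and a key give a `v`-bit
value. -/
abbrev QueryFn (v : ℕ) : Type := List Bool → ℕ → Fin v → Bool

/-- The random bit string `F = F(A, R_A)`. -/
def Frv (F : FBuilder n v u) (ω : IncOmega n v u) : List Bool := F ω.1.1.1 ω.1.1.2

/-- The random bit string `G = G(F(A, R_A), B, R_B)`. -/
def Grv (F : FBuilder n v u) (G : GBuilder n v u) (ω : IncOmega n v u) : List Bool :=
  G (Frv n v u F ω) ω.1.2.1 ω.1.2.2.1 ω.1.2.2.2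

/-- The random variable `B` (together with the set of parts `P_B` it samples from). -/
def Brv (ω : IncOmega n v u) : Finset (Fin (M n v)) × (Fin (M n v) → Fin (W n v u)) :=
  (ω.1.2.1, ω.1.2.2.1)

/-- The random variable `(B, R_B)`. -/
def BRrv (ω : IncOmega n v u) :
    Finset (Fin (M n v)) × (Fin (M n v) → Fin (W n v u)) × (Fin (M n v) → Fin v → Bool) :=
  ω.1.2

/-- Correctness of an incremental retrieval scheme `(F, G, Query)`: on every realization
in the support of the process, querying `F(A,R_A)` with a key of `A` returns its value,
and querying `G(F(A,R_A),B,R_B)` with a key of `A` or of `B` returns its value. -/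
def Correct (F : FBuilder n v u) (G : GBuilder n v u) (Q : QueryFn v) : Prop :=
  ∀ ω : IncOmega n v u,
    (∀ i, Q (Frv n v u F ω) (key n v u i (ω.1.1.1 i)) = ω.1.1.2 i) ∧
    (∀ i, Q (Grv n v u F G ω) (key n v u i (ω.1.1.1 i)) = ω.1.1.2 i) ∧
    (∀ i ∈ ω.1.2.1, Q (Grv n v u F G ω) (key n v u i (ω.1.2.2.1 i)) = ω.1.2.2.2 i)

/-- The plausible set `P_i(f)`: all pairs `(x, r)` of an element `x` of part `i` and a
`v`-bit value `r` with first bit `0` such that some realization `(A', R'_{A'})` in the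
support of `(A, R_A)` has `F(A', R'_{A'}) = f`, `x` the element of `A'` in part `i`, and
`r` its value. -/
def Plausible (F : FBuilder n v u) (f : List Bool) (i : Fin (M n v)) :
    Set (Fin (W n v u) × (Fin v → Bool)) :=
  {p | ∃ A' RA', ValidAR n v u A' RA' ∧ F A' RA' = f ∧ A' i = p.1 ∧ RA' i = p.2}

/-- A pair `(x, r) ∈ P_i(f)` *remains feasible after `B`* (given as `(P_B, B)`) if the
witness `(A', R'_{A'})` can additionally be chosen with `A' ∩ B = ∅`. -/
def Feasible (F : FBuilder n v u) (f : List Bool) (i : Fin (M n v))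
    (P : Finset (Fin (M n v))) (B : Fin (M n v) → Fin (W n v u))
    (p : Fin (W n v u) × (Fin v → Bool)) : Prop :=
  ∃ A' RA', ValidAR n v u A' RA' ∧ F A' RA' = f ∧ A' i = p.1 ∧ RA' i = p.2 ∧
    ∀ j ∈ P, B j ≠ A' j

end Retrieval

namespace Retrieval

/-! ### Auxiliary material for the proof of Claim 3.3 -/

section Aux

open Finset

private lemma sum_comp_const_fiber {Ω Ω' : Type*} [Fintype Ω] [Fintype Ω'] (π : Ω → Ω')
    (K : ℕ) (hfib : ∀ d : Ω', Nat.card {ω : Ω // π ω = d} = K) (g : Ω' → ℝ) :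
    ∑ ω : Ω, g (π ω) = K * ∑ d : Ω', g d := by
  classical
  rw [← Finset.sum_fiberwise_of_maps_to' (fun i _ => Finset.mem_univ (π i)) g, Finset.mul_sum]
  refine Finset.sum_congr rfl fun d _ => ?_
  rw [Finset.sum_const, ← hfib d, Nat.card_eq_fintype_card, Fintype.card_subtype]
  simp [nsmul_eq_mul]

private lemma ncard_set_eq_sum {β : Type*} [Fintype β] (q : β → Prop) [DecidablePred q] :
    (Nat.card {x : β | q x} : ℝ) = ∑ x : β, if q x then (1:ℝ) else 0 := by
  have h : Nat.card {x : β | q x} = Fintype.card {x : β // q x} := by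
    rw [Nat.card_eq_fintype_card]; exact Fintype.card_congr (Equiv.refl _)
  rw [h, Fintype.card_subtype, Finset.card_filter]
  push_cast
  exact Finset.sum_congr rfl (fun x _ => by split <;> simp)

private lemma card_preimage_const_fiber {Ω Ω' : Type*} [Fintype Ω] [Fintype Ω'] (π : Ω → Ω')
    (K : ℕ) (hfib : ∀ d : Ω', Nat.card {ω : Ω // π ω = d} = K) (p : Ω' → Prop) :
    (Nat.card {ω : Ω | p (π ω)} : ℝ) = K * (Nat.card {d : Ω' | p d} : ℝ) := by
  classical
  rw [ncard_set_eq_sum, ncard_set_eq_sum,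
    sum_comp_const_fiber π K hfib (fun d => if p d then (1:ℝ) else 0)]

private lemma unifPr_comp_const_fiber {Ω Ω' : Type*} [Fintype Ω] [Fintype Ω'] (π : Ω → Ω')
    (K : ℕ) (hK : K ≠ 0) (hfib : ∀ d : Ω', Nat.card {ω : Ω // π ω = d} = K) (p : Ω' → Prop) :
    unifPr Ω {ω | p (π ω)} = unifPr Ω' {d | p d} := by
  have hcard : (Fintype.card Ω : ℝ) = K * Fintype.card Ω' := by
    simpa [mul_comm] using sum_comp_const_fiber π K hfib (fun _ => (1:ℝ))
  rw [unifPr, unifPr, card_preimage_const_fiber π K hfib p, hcard,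
    mul_div_mul_left _ _ (by exact_mod_cast hK)]

private lemma entropy_comp_const_fiber {Ω Ω' α : Type*} [Fintype Ω] [Fintype Ω'] (π : Ω → Ω')
    (K : ℕ) (hK : K ≠ 0) (hfib : ∀ d : Ω', Nat.card {ω : Ω // π ω = d} = K) (X : Ω' → α) :
    entropy (fun ω => X (π ω)) = entropy X := by
  have hcard : (Fintype.card Ω : ℝ) = K * Fintype.card Ω' := by
    simpa [mul_comm] using sum_comp_const_fiber π K hfib (fun _ => (1:ℝ))
  have h1 : ∀ ω : Ω, unifPr Ω {ω' | X (π ω') = X (π ω)} = unifPr Ω' {d | X d = X (π ω)} :=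
    fun ω => unifPr_comp_const_fiber π K hK hfib (fun d => X d = X (π ω))
  rw [entropy, entropy]
  calc (∑ ω : Ω, -Real.logb 2 (unifPr Ω {ω' | X (π ω') = X (π ω)})) / (Fintype.card Ω : ℝ)
      = (∑ ω : Ω, -Real.logb 2 (unifPr Ω' {d | X d = X (π ω)})) / (Fintype.card Ω : ℝ) := by
        rw [Finset.sum_congr rfl fun ω _ => by rw [h1 ω]]
    _ = (K * ∑ d : Ω', -Real.logb 2 (unifPr Ω' {d' | X d' = X d})) / (K * Fintype.card Ω') := by
        rw [hcard,
          sum_comp_const_fiber π K hfib (fun d => -Real.logb 2 (unifPr Ω' {d' | X d' = X d}))]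
    _ = _ := mul_div_mul_left _ _ (by exact_mod_cast hK)

private lemma two_rpow_sum {ι : Type*} (s : Finset ι) (f : ι → ℝ) :
    (2:ℝ) ^ (∑ i ∈ s, f i) = ∏ i ∈ s, (2:ℝ) ^ (f i) := by
  induction s using Finset.cons_induction with
  | empty => simp
  | cons a s ha ih => rw [Finset.sum_cons, Finset.prod_cons, Real.rpow_add (by norm_num), ih]

end Aux

section Model

variable {n v u : ℕ}

private lemma hyp_n4 (h : Hyp n v u) : 4 ≤ n := by
  obtain ⟨hv, hlog, -⟩ := h
  have hn0 : 0 < n := by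
    rcases Nat.eq_zero_or_pos n with h0 | h0
    · exfalso
      rw [h0] at hlog
      simp [Real.logb] at hlog
      have : (2:ℝ) ≤ v := by exact_mod_cast hv
      linarith
    · exact h0
  have h2 : (2:ℝ) ≤ Real.logb 2 n := le_trans (by exact_mod_cast hv) hlog
  have h3 : ((2:ℝ) ^ (2:ℝ)) ≤ (2:ℝ) ^ Real.logb 2 n :=
    Real.rpow_le_rpow_of_exponent_le one_le_two h2
  rw [Real.rpow_logb (by norm_num) (by norm_num) (by exact_mod_cast hn0)] at h3
  have h4 : ((2:ℝ) ^ (2:ℝ)) = 4 := by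
    rw [show (2:ℝ) = ((2:ℕ):ℝ) from rfl, Real.rpow_natCast]; norm_num
  rw [h4] at h3
  exact_mod_cast h3

private lemma hyp_M_pos (h : Hyp n v u) : 0 < M n v := by
  have hn4 := hyp_n4 h
  have hv := h.1
  exact Nat.sub_pos_of_lt (Nat.div_lt_self (show 0 < n by omega) (show 1 < v by omega))

private lemma hyp_nv_le_M (h : Hyp n v u) : n / v ≤ M n v := by
  obtain ⟨hv, -, hvn, -⟩ := h
  have h1 : v * (n / v) = n := Nat.mul_div_cancel' hvn
  have h2 : 2 * (n / v) ≤ v * (n / v) := Nat.mul_le_mul_right _ hv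
  unfold M
  generalize hk : n / v = k at *
  omega

private lemma hyp_W2 (h : Hyp n v u) : 2 ≤ W n v u := by
  have hn4 := hyp_n4 h
  have hM0 := hyp_M_pos h
  have hMn : M n v ≤ n := Nat.sub_le _ _
  have h1 : 2 * M n v ≤ u := by
    have ha : 2 * n ≤ n ^ 3 := by
      have ha1 : 2 * n ≤ n * n := Nat.mul_le_mul_right n (by omega)
      have ha2 : n * n * 1 ≤ n * n * n := Nat.mul_le_mul_left _ (by omega)
      calc 2 * n ≤ n * n := ha1
        _ = n * n * 1 := by ring
        _ ≤ n * n * n := ha2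
        _ = n ^ 3 := by ring
    have hb := h.2.2.2.2
    have hc : 2 * M n v ≤ 2 * n := by omega
    linarith
  exact (Nat.le_div_iff_mul_le hM0).2 h1

private lemma hyp_u_eq (h : Hyp n v u) : u = M n v * W n v u :=
  (Nat.mul_div_cancel' h.2.2.2.1).symm

/-- The space of valid realizations of `(A, R_A)`. -/
private abbrev OmegaA (n v u : ℕ) : Type :=
  {d : (Fin (M n v) → Fin (W n v u)) × (Fin (M n v) → Fin v → Bool) // ValidAR n v u d.1 d.2}

/-- The space of valid extensions `(P_B, B, R_B)` of a given `A`. -/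
private abbrev ExtT (n v u : ℕ) (A : Fin (M n v) → Fin (W n v u)) : Type :=
  {e : Finset (Fin (M n v)) × (Fin (M n v) → Fin (W n v u)) × (Fin (M n v) → Fin v → Bool) //
    ValidB n v u A e.1 e.2.1 ∧ ValidRB n v e.1 e.2.2}

private def proj (n v u : ℕ) (ω : IncOmega n v u) : OmegaA n v u := ⟨ω.1.1, ω.2.1⟩

/-- The fiber of `proj` over `d` is the set of valid extensions of `d`. -/
private def fiberEquiv (d : OmegaA n v u) :
    {ω : IncOmega n v u // proj n v u ω = d} ≃ ExtT n v u d.1.1 where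
  toFun ω := ⟨ω.1.1.2, by
    have h : ω.1.1.1 = d.1 := congrArg Subtype.val ω.2
    have h1 : ω.1.1.1.1 = d.1.1 := congrArg Prod.fst h
    rw [← h1]
    exact ⟨ω.1.2.2.1, ω.1.2.2.2⟩⟩
  invFun e := ⟨⟨⟨d.1, e.1⟩, d.2, e.2.1, e.2.2⟩, Subtype.ext rfl⟩
  left_inv ω := by
    apply Subtype.ext; apply Subtype.ext
    have h : ω.1.1.1 = d.1 := congrArg Subtype.val ω.2
    exact Prod.ext h.symm rfl
  right_inv e := rfl

private def swapB (A A' B : Fin (M n v) → Fin (W n v u)) (P : Finset (Fin (M n v)))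
    (j : Fin (M n v)) : Fin (W n v u) :=
  if j ∈ P then Equiv.swap (A j) (A' j) (B j) else B j

private lemma swapB_valid {A A' B : Fin (M n v) → Fin (W n v u)} {P : Finset (Fin (M n v))}
    (hB : ValidB n v u A P B) : ValidB n v u A' P (swapB A A' B P) := by
  obtain ⟨h1, h2, h3⟩ := hB
  refine ⟨h1, fun j hj hEq => h2 j hj ?_, fun j hj => ?_⟩
  · rw [swapB, if_pos hj] at hEq
    exact (Equiv.swap (A j) (A' j)).injective (hEq.trans (Equiv.swap_apply_left _ _).symm)
  · rw [swapB, if_neg hj]; exact h3 j hj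

private lemma swapB_invol {A A' B : Fin (M n v) → Fin (W n v u)} {P : Finset (Fin (M n v))} :
    swapB A' A (swapB A A' B P) P = B := by
  funext j
  by_cases hj : j ∈ P
  · rw [swapB, swapB, if_pos hj, if_pos hj, Equiv.swap_comm, Equiv.swap_apply_self]
  · rw [swapB, swapB, if_neg hj, if_neg hj]

/-- The set of valid extensions of `A` is in bijection with that of `A'`. -/
private def extEquiv (A A' : Fin (M n v) → Fin (W n v u)) : ExtT n v u A ≃ ExtT n v u A' where
  toFun e := ⟨⟨e.1.1, swapB A A' e.1.2.1 e.1.1, e.1.2.2⟩, swapB_valid e.2.1, e.2.2⟩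
  invFun e := ⟨⟨e.1.1, swapB A' A e.1.2.1 e.1.1, e.1.2.2⟩, swapB_valid e.2.1, e.2.2⟩
  left_inv e := by apply Subtype.ext; exact Prod.ext rfl (Prod.ext swapB_invol rfl)
  right_inv e := by apply Subtype.ext; exact Prod.ext rfl (Prod.ext swapB_invol rfl)

private lemma extT_nonempty (hv : 0 < v) (hW : 2 ≤ W n v u) (hnv : n / v ≤ M n v)
    (A : Fin (M n v) → Fin (W n v u)) : Nonempty (ExtT n v u A) := by
  classical
  obtain ⟨P, -, hP⟩ := Finset.exists_subset_card_eq (s := (Finset.univ : Finset (Fin (M n v)))) (n := n / v)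
    (by simpa using hnv)
  have h0 : 0 < W n v u := by omega
  have h1 : 1 < W n v u := by omega
  refine ⟨⟨⟨P, fun j => if j ∈ P then (if A j = ⟨0, h0⟩ then ⟨1, h1⟩ else ⟨0, h0⟩) else ⟨0, h0⟩,
    fun j => if j ∈ P then (fun _ => true) else (fun _ => false)⟩, ⟨hP, ?_, ?_⟩, ?_, ?_⟩⟩
  · intro j hj
    dsimp only at hj ⊢
    rw [if_pos hj]
    split
    · next h => rw [h]; intro hc; exact absurd (congrArg Fin.val hc) (by simp)
    · next h => exact fun hc => h hc.symm
  · intro j hj; dsimp only at hj ⊢; rw [if_neg hj]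
  · intro j hj; dsimp only at hj ⊢; rw [if_pos hj]; simp [firstBit, hv]
  · intro j hj; dsimp only at hj ⊢; rw [if_neg hj]

private lemma omegaA_nonempty (hv : 0 < v) (hW : 2 ≤ W n v u) : Nonempty (OmegaA n v u) := by
  have h0 : 0 < W n v u := by omega
  exact ⟨⟨⟨fun _ => ⟨0, h0⟩, fun _ _ => false⟩, fun j => by simp [firstBit]⟩⟩

end Model

section Counting

variable {n v u : ℕ}

/-- The number of valid `(A, R_A)` mapping to a given filter `f` under `F` is at most the
product of the sizes of the plausible sets. -/
private lemma card_level_le (F : FBuilder n v u) (d : OmegaA n v u) :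
    Nat.card {d' : OmegaA n v u // F d'.1.1 d'.1.2 = F d.1.1 d.1.2} ≤
      ∏ i : Fin (M n v), Nat.card (Plausible n v u F (F d.1.1 d.1.2) i) := by
  classical
  rw [← Nat.card_pi]
  refine Nat.card_le_card_of_injective
    (fun d' => fun i => ⟨(d'.1.1.1 i, d'.1.1.2 i), d'.1.1.1, d'.1.1.2, d'.1.2, d'.2, rfl, rfl⟩)
    ?_
  intro a b hab
  have h1 : ∀ i, a.1.1.1 i = b.1.1.1 i ∧ a.1.1.2 i = b.1.1.2 i := by
    intro i
    have h2 := congrArg Subtype.val (congrFun hab i)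
    exact ⟨congrArg Prod.fst h2, congrArg Prod.snd h2⟩
  apply Subtype.ext; apply Subtype.ext
  exact Prod.ext (funext fun i => (h1 i).1) (funext fun i => (h1 i).2)

/-- Lower bound on the number of valid realizations of `(A, R_A)`. -/
private lemma card_omegaA_ge (hv : 0 < v) :
    (W n v u * 2 ^ (v - 1)) ^ M n v ≤ Nat.card (OmegaA n v u) := by
  classical
  have key : Nat.card ((Fin (M n v) → Fin (W n v u)) × (Fin (M n v) → Fin (v - 1) → Bool)) ≤
      Nat.card (OmegaA n v u) := by
    refine Nat.card_le_card_of_injective (fun pg =>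
      ⟨⟨pg.1, fun j k => if hk : (k : ℕ) = 0 then false
        else pg.2 j ⟨(k : ℕ) - 1, by omega⟩⟩, fun j => by simp [firstBit, hv]⟩) ?_
    intro a b hab
    have h2 := congrArg Subtype.val hab
    dsimp only at h2
    rw [Prod.mk.injEq] at h2
    obtain ⟨hA, hR⟩ := h2
    refine Prod.ext hA (funext fun j => funext fun k => ?_)
    have h3 := congrFun (congrFun hR j) ⟨(k : ℕ) + 1, by omega⟩
    dsimp only at h3
    rw [dif_neg (by simp), dif_neg (by simp)] at h3
    simpa using h3
  refine le_trans (le_of_eq ?_) key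
  rw [Nat.card_prod, Nat.card_fun, Nat.card_fun, Nat.card_fun]
  simp [Nat.card_eq_fintype_card, ← mul_pow]

end Counting


/-- **Claim 3.3.** For every deterministic incremental retrieval scheme `(F, G, Query)`
in the model and every real `S ≥ H(F)`: if `i` is drawn uniformly from `{1, …, m}`,
independently of the process, then the expected size of the plausible set satisfies
`E_{i, A, R_A}[ |P_i(F(A, R_A))| ] ≥ (u/m) · 2^{v − 1} · 2^{−S/m}`.

(The marginal distribution of `(A, R_A)` is the uniform distribution on its valid
realizations; the expectation is written out as the corresponding average.) -/
theorem plausible_set_expected_size :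
    ∀ n v u : ℕ, Hyp n v u →
    ∀ (F : FBuilder n v u) (G : GBuilder n v u) (Q : QueryFn v),
      Correct n v u F G Q →
    ∀ S : ℝ, entropy (Frv n v u F) ≤ S →
      ((u : ℝ) / M n v) * 2 ^ ((v : ℝ) - 1) * 2 ^ (-(S / M n v)) ≤
        (∑ i : Fin (M n v),
            ∑ d : (Fin (M n v) → Fin (W n v u)) × (Fin (M n v) → Fin v → Bool),
              Set.indicator {d | ValidAR n v u d.1 d.2}
                (fun d => (Nat.card (Plausible n v u F (F d.1 d.2) i) : ℝ)) d) /
          ((M n v : ℝ) *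
            (Nat.card {d : (Fin (M n v) → Fin (W n v u)) × (Fin (M n v) → Fin v → Bool) //
              ValidAR n v u d.1 d.2} : ℝ)) := by
  intro n v u hyp F G Q hQ S hS
  classical
  have hv2 : 2 ≤ v := hyp.1
  have hv0 : 0 < v := by omega
  have hM0 : 0 < M n v := hyp_M_pos hyp
  have hW2 : 2 ≤ W n v u := hyp_W2 hyp
  have hnv : n / v ≤ M n v := hyp_nv_le_M hyp
  have hW0 : 0 < W n v u := by omega
  -- the marginal space of `(A, R_A)` and the random filter on it
  set X : OmegaA n v u → List Bool := fun d => F d.1.1 d.1.2 with hX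
  have hNE : Nonempty (OmegaA n v u) := omegaA_nonempty hv0 hW2
  set N : ℕ := Nat.card (OmegaA n v u) with hNdef
  have hN0 : 0 < N := Nat.card_pos
  -- entropy transfer from the full process to the marginal
  set A₀ : Fin (M n v) → Fin (W n v u) := fun _ => ⟨0, hW0⟩ with hA₀
  have hKex : Nonempty (ExtT n v u A₀) := extT_nonempty hv0 hW2 hnv A₀
  have hfib : ∀ d : OmegaA n v u,
      Nat.card {ω : IncOmega n v u // proj n v u ω = d} = Nat.card (ExtT n v u A₀) := fun d => by
    rw [Nat.card_congr (fiberEquiv d), Nat.card_congr (extEquiv d.1.1 A₀)]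
  have hKne : Nat.card (ExtT n v u A₀) ≠ 0 := Nat.card_pos.ne'
  have hent : entropy X ≤ S := by
    have h1 : entropy (Frv n v u F) = entropy X :=
      entropy_comp_const_fiber (proj n v u) _ hKne hfib X
    linarith [hS, h1.symm.le, h1.le]
  -- sizes of plausible sets
  set q : OmegaA n v u → Fin (M n v) → ℕ :=
    fun d i => Nat.card (Plausible n v u F (X d) i) with hq
  have hq1 : ∀ d i, 1 ≤ q d i := by
    intro d i
    have : Nonempty (Plausible n v u F (X d) i) :=
      ⟨⟨(d.1.1 i, d.1.2 i), d.1.1, d.1.2, d.2, rfl, rfl, rfl⟩⟩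
    exact Nat.card_pos
  -- level set sizes
  set c : OmegaA n v u → ℕ := fun d => Nat.card {d' : OmegaA n v u // X d' = X d} with hc
  have hc1 : ∀ d, 0 < c d := fun d => @Nat.card_pos _ ⟨⟨d, rfl⟩⟩ _
  have hPr : ∀ d, unifPr (OmegaA n v u) {d' | X d' = X d} = (c d : ℝ) / N := by
    intro d
    rw [unifPr, ← Nat.card_eq_fintype_card]
    rfl
  -- pointwise entropy-counting inequality
  have hlogN : ∀ d : OmegaA n v u,
      Real.logb 2 N + Real.logb 2 (unifPr (OmegaA n v u) {d' | X d' = X d}) ≤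
        ∑ i : Fin (M n v), Real.logb 2 (q d i) := by
    intro d
    have hcpos : (0:ℝ) < c d := by exact_mod_cast hc1 d
    have hNpos : (0:ℝ) < N := by exact_mod_cast hN0
    have h1 : (c d : ℝ) ≤ ∏ i : Fin (M n v), (q d i : ℝ) := by
      have := card_level_le F d
      have h2 : c d ≤ ∏ i : Fin (M n v), q d i := this
      exact_mod_cast h2
    have h2 : Real.logb 2 (c d) ≤ Real.logb 2 (∏ i : Fin (M n v), (q d i : ℝ)) :=
      Real.logb_le_logb_of_le one_lt_two hcpos h1
    rw [Real.logb_prod _ _ (fun i _ => by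
      have := hq1 d i; positivity)] at h2
    rw [hPr d, Real.logb_div hcpos.ne' hNpos.ne']
    linarith
  -- summing over the marginal space
  have hNcard : (Fintype.card (OmegaA n v u) : ℝ) = (N : ℝ) := by
    rw [hNdef, Nat.card_eq_fintype_card]
  have hsum : (N : ℝ) * Real.logb 2 N - (N : ℝ) * S ≤
      ∑ d : OmegaA n v u, ∑ i : Fin (M n v), Real.logb 2 (q d i) := by
    have h1 := Finset.sum_le_sum (fun d (_ : d ∈ Finset.univ) => hlogN d)
    have hEdef : (∑ d : OmegaA n v u,
        -Real.logb 2 (unifPr (OmegaA n v u) {d' | X d' = X d})) = entropy X * N := by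
      have hne : ((N:ℕ):ℝ) ≠ 0 := ne_of_gt (by exact_mod_cast hN0)
      rw [entropy, hNcard, div_mul_cancel₀ _ hne]
    rw [Finset.sum_add_distrib, Finset.sum_const, Finset.card_univ, nsmul_eq_mul, hNcard] at h1
    have h2 : (∑ d : OmegaA n v u,
        Real.logb 2 (unifPr (OmegaA n v u) {d' | X d' = X d})) = -(entropy X * N) := by
      rw [← hEdef, ← Finset.sum_neg_distrib]
      exact Finset.sum_congr rfl fun d _ => (neg_neg _).symm
    rw [h2] at h1
    have h3 : (N:ℝ) * entropy X ≤ (N:ℝ) * S :=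
      mul_le_mul_of_nonneg_left hent (by positivity)
    linarith
  -- lower bound on `N`
  have hNlow : (M n v : ℝ) * Real.logb 2 ((W n v u * 2 ^ (v - 1) : ℕ) : ℝ) ≤ Real.logb 2 N := by
    have h1 : ((W n v u * 2 ^ (v - 1)) ^ M n v : ℕ) ≤ N := card_omegaA_ge hv0
    have hbase : (0:ℝ) < ((W n v u * 2 ^ (v - 1) : ℕ) : ℝ) := by
      have : 0 < W n v u * 2 ^ (v - 1) := by positivity
      exact_mod_cast this
    have h2 : Real.logb 2 (((W n v u * 2 ^ (v - 1) : ℕ) : ℝ) ^ M n v) ≤ Real.logb 2 N :=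
      Real.logb_le_logb_of_le one_lt_two (by positivity) (by exact_mod_cast h1)
    rwa [Real.logb_pow] at h2
  -- the average exponent
  set L : ℝ := Real.logb 2 ((W n v u * 2 ^ (v - 1) : ℕ) : ℝ) with hL
  have hMpos : (0:ℝ) < (M n v : ℝ) := by exact_mod_cast hM0
  have hNpos : (0:ℝ) < (N : ℝ) := by exact_mod_cast hN0
  have hElow : L - S / (M n v : ℝ) ≤
      (∑ p : OmegaA n v u × Fin (M n v), Real.logb 2 (q p.1 p.2)) *
        (1 / ((N:ℝ) * (M n v : ℝ))) := by
    have hT : (N:ℝ) * ((M n v : ℝ) * L) - (N:ℝ) * S ≤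
        ∑ p : OmegaA n v u × Fin (M n v), Real.logb 2 (q p.1 p.2) := by
      rw [Fintype.sum_prod_type]
      have := mul_le_mul_of_nonneg_left hNlow (le_of_lt hNpos)
      calc (N:ℝ) * ((M n v : ℝ) * L) - (N:ℝ) * S
          ≤ (N:ℝ) * Real.logb 2 N - (N:ℝ) * S := by nlinarith
        _ ≤ _ := hsum
    have heq : L - S / (M n v : ℝ) =
        ((N:ℝ) * ((M n v : ℝ) * L) - (N:ℝ) * S) * (1 / ((N:ℝ) * (M n v : ℝ))) := by
      field_simp
    rw [heq]
    exact mul_le_mul_of_nonneg_right hT (by positivity)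
  -- AM-GM
  have hwsum : (∑ _p : OmegaA n v u × Fin (M n v), 1 / ((N:ℝ) * (M n v : ℝ))) = 1 := by
    rw [Finset.sum_const, Finset.card_univ, nsmul_eq_mul, Fintype.card_prod, Fintype.card_fin]
    push_cast [← Nat.card_eq_fintype_card]
    rw [← hNdef]
    field_simp
  have amgm := Real.geom_mean_le_arith_mean_weighted Finset.univ
    (fun _ : OmegaA n v u × Fin (M n v) => 1 / ((N:ℝ) * (M n v : ℝ)))
    (fun p => (q p.1 p.2 : ℝ)) (fun i _ => by positivity) hwsum (fun i _ => by positivity)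
  have hprod : (∏ p : OmegaA n v u × Fin (M n v),
      ((q p.1 p.2 : ℝ)) ^ (1 / ((N:ℝ) * (M n v : ℝ)))) =
      (2:ℝ) ^ ((∑ p : OmegaA n v u × Fin (M n v), Real.logb 2 (q p.1 p.2)) *
        (1 / ((N:ℝ) * (M n v : ℝ)))) := by
    rw [Finset.sum_mul, two_rpow_sum]
    refine Finset.prod_congr rfl fun p _ => ?_
    have hqp : (0:ℝ) < (q p.1 p.2 : ℝ) := by exact_mod_cast hq1 p.1 p.2
    rw [Real.rpow_mul (by norm_num : (0:ℝ) ≤ 2),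
      Real.rpow_logb (by norm_num) (by norm_num) hqp]
  -- rewrite the right-hand side of the claim
  have hind : ∀ i : Fin (M n v),
      (∑ d : (Fin (M n v) → Fin (W n v u)) × (Fin (M n v) → Fin v → Bool),
        Set.indicator {d | ValidAR n v u d.1 d.2}
          (fun d => (Nat.card (Plausible n v u F (F d.1 d.2) i) : ℝ)) d) =
      ∑ d : OmegaA n v u, (q d i : ℝ) := by
    intro i
    calc (∑ d : (Fin (M n v) → Fin (W n v u)) × (Fin (M n v) → Fin v → Bool),
        Set.indicator {d | ValidAR n v u d.1 d.2}
          (fun d => (Nat.card (Plausible n v u F (F d.1 d.2) i) : ℝ)) d)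
        = ∑ d : (Fin (M n v) → Fin (W n v u)) × (Fin (M n v) → Fin v → Bool),
            (if ValidAR n v u d.1 d.2
              then (Nat.card (Plausible n v u F (F d.1 d.2) i) : ℝ) else 0) :=
          Finset.sum_congr rfl fun d _ => Set.indicator_apply _ _ d
      _ = ∑ d ∈ Finset.univ.filter
            (fun d : (Fin (M n v) → Fin (W n v u)) × (Fin (M n v) → Fin v → Bool) =>
              ValidAR n v u d.1 d.2),
            (Nat.card (Plausible n v u F (F d.1 d.2) i) : ℝ) := (Finset.sum_filter _ _).symm
      _ = ∑ d : OmegaA n v u, (q d i : ℝ) :=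
          Finset.sum_subtype _ (by intro x; simp) _
  have hswap : (∑ i : Fin (M n v), ∑ d : OmegaA n v u, (q d i : ℝ)) =
      ∑ p : OmegaA n v u × Fin (M n v), (q p.1 p.2 : ℝ) := by
    rw [Fintype.sum_prod_type]
    exact Finset.sum_comm
  -- final chain
  have hu : ((u : ℝ) / (M n v : ℝ)) = (W n v u : ℝ) := by
    have h1 : (u : ℝ) = (M n v : ℝ) * (W n v u : ℝ) := by exact_mod_cast hyp_u_eq hyp
    rw [h1]; field_simp
  have hv1 : (2:ℝ) ^ ((v:ℝ) - 1) = ((2 ^ (v - 1) : ℕ) : ℝ) := by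
    have h1 : ((v:ℝ) - 1) = (((v - 1 : ℕ)) : ℝ) := by
      have : (1:ℕ) ≤ v := by omega
      push_cast [Nat.cast_sub this]
      ring
    rw [h1, Real.rpow_natCast]
    push_cast
    ring
  have hc0 : (0:ℝ) < ((W n v u * 2 ^ (v - 1) : ℕ) : ℝ) := by
    have : 0 < W n v u * 2 ^ (v - 1) := by positivity
    exact_mod_cast this
  calc ((u : ℝ) / (M n v : ℝ)) * (2:ℝ) ^ ((v:ℝ) - 1) * (2:ℝ) ^ (-(S / (M n v : ℝ)))
      = ((W n v u * 2 ^ (v - 1) : ℕ) : ℝ) * (2:ℝ) ^ (-(S / (M n v : ℝ))) := by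
        rw [hu, hv1]; push_cast; ring
    _ = (2:ℝ) ^ (L - S / (M n v : ℝ)) := by
        rw [hL, sub_eq_add_neg, Real.rpow_add (by norm_num : (0:ℝ) < 2),
          Real.rpow_logb (by norm_num) (by norm_num) hc0]
    _ ≤ (2:ℝ) ^ ((∑ p : OmegaA n v u × Fin (M n v), Real.logb 2 (q p.1 p.2)) *
          (1 / ((N:ℝ) * (M n v : ℝ)))) :=
        Real.rpow_le_rpow_of_exponent_le one_le_two hElow
    _ = ∏ p : OmegaA n v u × Fin (M n v),
          ((q p.1 p.2 : ℝ)) ^ (1 / ((N:ℝ) * (M n v : ℝ))) := hprod.symm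
    _ ≤ ∑ p : OmegaA n v u × Fin (M n v), (1 / ((N:ℝ) * (M n v : ℝ))) * (q p.1 p.2 : ℝ) := amgm
    _ = (∑ p : OmegaA n v u × Fin (M n v), (q p.1 p.2 : ℝ)) / ((M n v : ℝ) * (N : ℝ)) := by
        rw [← Finset.mul_sum]
        rw [div_eq_mul_inv, mul_comm ((M n v : ℝ)) ((N:ℝ))]
        ring
    _ = (∑ i : Fin (M n v),
          ∑ d : (Fin (M n v) → Fin (W n v u)) × (Fin (M n v) → Fin v → Bool),
            Set.indicator {d | ValidAR n v u d.1 d.2}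
              (fun d => (Nat.card (Plausible n v u F (F d.1 d.2) i) : ℝ)) d) /
        ((M n v : ℝ) * (N : ℝ)) := by
        rw [Finset.sum_congr rfl fun i _ => hind i, hswap]
    _ = _ := by rw [hNdef]

end Retrieval
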